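/- Let F_n(θ) = Z_n(e^{−imθ}) · (1/(n+1)) ∑_{k=1}^{n+1} e^{iθ X_k}, where (X_k) are the values of a branching random walk with i.i.d. increments Δ (of characteristic function Φ) built on the random recursive tree, and Z_n(x) = ∏_{j=1}^n ((j−1)/j + x/j). Then for every n ≥ 1 and θ, E[F_n(θ)] = (1/(n+1)) · Z_n(e^{−imθ}) · Z_n(Φ(θ) + 1) = (1/(n+1)) · Z_n(e^{−imθ}) · ∏_{j=1}^n (1 + Φ(θ)/j). -/

import Mathlib

open MeasureTheory
open ProbabilityTheory

/-- `Z_n(x) = ∏_{j=1}^n ((j−1)/j + x/j)`. -/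
noncomputable def Zc (n : ℕ) (x : ℂ) : ℂ :=
  ∏ j ∈ Finset.Icc 1 n, (((j : ℂ) - 1) / j + x / j)

/-- The law of the label vector `(X₁, …, X_{n+1})` of the branching random walk with
i.i.d. increments of law `ν` built on the random recursive tree: the root has label `0`,
and each new node attaches to a uniformly chosen existing node, its label being its
parent's label plus an independent increment. -/
noncomputable def brwLaw (ν : Measure ℝ) : (n : ℕ) → Measure (Fin (n + 1) → ℝ)
  | 0 => Measure.dirac (fun _ => 0)
  | n + 1 => (brwLaw ν n).bind fun xs =>
      ((PMF.uniformOfFintype (Fin (n + 1))).toMeasure).bind fun k =>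
        Measure.map (fun d => Fin.snoc xs (xs k + d)) ν


lemma Zc_add_one (n : ℕ) (Φ : ℂ) :
    Zc n (Φ + 1) = ∏ j ∈ Finset.Icc 1 n, (1 + Φ / (j : ℂ)) := by
  unfold Zc
  refine Finset.prod_congr rfl fun j hj => ?_
  have hj1 : 1 ≤ j := (Finset.mem_Icc.mp hj).1
  have hne : (j : ℂ) ≠ 0 := Nat.cast_ne_zero.mpr (by omega)
  field_simp
  ring


section Aux

lemma my_snd_compProd {α β : Type*} [MeasurableSpace α] [MeasurableSpace β]
    (μ : Measure α) [SFinite μ] (K : Kernel α β) [IsSFiniteKernel K] :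
    (μ ⊗ₘ K).snd = μ.bind K := by
  ext s hs
  rw [Measure.snd_apply hs, Measure.compProd_apply (measurable_snd hs),
    Measure.bind_apply hs (Kernel.measurable K).aemeasurable]
  rfl

lemma my_integral_bind {α β : Type*} [MeasurableSpace α] [MeasurableSpace β]
    (μ : Measure α) [IsProbabilityMeasure μ] (κ : α → Measure β) (hκ : Measurable κ)
    (hp : ∀ a, IsProbabilityMeasure (κ a)) (f : β → ℂ) (hf : Measurable f)
    (C : ℝ) (hC : ∀ b, ‖f b‖ ≤ C) :
    ∫ b, f b ∂(μ.bind κ) = ∫ a, ∫ b, f b ∂(κ a) ∂μ := by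
  set K : Kernel α β := ⟨κ, hκ⟩ with hK
  have : IsMarkovKernel K := ⟨fun a => hp a⟩
  have hb : μ.bind κ = (μ ⊗ₘ K).snd := (my_snd_compProd μ K).symm
  have hint : Integrable (fun p : α × β => f p.2) (μ ⊗ₘ K) :=
    Integrable.mono' (integrable_const C) ((hf.comp measurable_snd).aestronglyMeasurable)
      (Filter.Eventually.of_forall fun p => hC p.2)
  rw [hb, Measure.snd, integral_map measurable_snd.aemeasurable hf.aestronglyMeasurable,
    Measure.integral_compProd hint]
  rfl

lemma measurable_snocMap {n : ℕ} (k : Fin (n + 1)) :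
    Measurable (fun p : (Fin (n + 1) → ℝ) × ℝ => (Fin.snoc p.1 (p.1 k + p.2) : Fin (n + 2) → ℝ)) := by
  apply measurable_pi_lambda
  intro i
  refine Fin.lastCases ?_ ?_ i
  · simp only [Fin.snoc_last]
    exact ((measurable_pi_apply k).comp measurable_fst).add measurable_snd
  · intro j
    simp only [Fin.snoc_castSucc]
    exact (measurable_pi_apply j).comp measurable_fst


lemma measurable_snocFun {n : ℕ} (xs : Fin (n + 1) → ℝ) (k : Fin (n + 1)) :
    Measurable (fun d : ℝ => (Fin.snoc xs (xs k + d) : Fin (n + 2) → ℝ)) := by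
  apply measurable_pi_lambda
  intro i
  refine Fin.lastCases ?_ ?_ i
  · simp only [Fin.snoc_last]
    exact measurable_const.add measurable_id
  · intro j
    simp only [Fin.snoc_castSucc]
    exact measurable_const

lemma measurable_kernelFam (ν : Measure ℝ) [SFinite ν] (n : ℕ) :
    Measurable (fun xs : Fin (n + 1) → ℝ =>
      ((PMF.uniformOfFintype (Fin (n + 1))).toMeasure).bind fun k =>
        Measure.map (fun d => (Fin.snoc xs (xs k + d) : Fin (n + 2) → ℝ)) ν) := by
  apply Measure.measurable_of_measurable_coe
  intro s hs
  have hmk : ∀ xs : Fin (n + 1) → ℝ, Measurable (fun k : Fin (n + 1) =>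
      Measure.map (fun d => (Fin.snoc xs (xs k + d) : Fin (n + 2) → ℝ)) ν) :=
    fun xs => measurable_of_countable _
  simp_rw [Measure.bind_apply hs (hmk _).aemeasurable]
  have hmap : ∀ (xs : Fin (n + 1) → ℝ) (k : Fin (n + 1)),
      (Measure.map (fun d => (Fin.snoc xs (xs k + d) : Fin (n + 2) → ℝ)) ν) s
        = ν (Prod.mk xs ⁻¹' ((fun p : (Fin (n + 1) → ℝ) × ℝ =>
            (Fin.snoc p.1 (p.1 k + p.2) : Fin (n + 2) → ℝ)) ⁻¹' s)) := by
    intro xs k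
    rw [Measure.map_apply (measurable_snocFun xs k) hs]
    rfl
  simp_rw [hmap, lintegral_fintype]
  apply Finset.measurable_sum
  intro k _
  exact (measurable_measure_prodMk_left ((measurable_snocMap k) hs)).mul measurable_const


lemma brwLaw_prob (ν : Measure ℝ) [IsProbabilityMeasure ν] (n : ℕ) :
    IsProbabilityMeasure (brwLaw ν n) := by
  induction n with
  | zero => exact Measure.dirac.isProbabilityMeasure
  | succ n ih =>
    constructor
    rw [brwLaw, Measure.bind_apply MeasurableSet.univ (measurable_kernelFam ν n).aemeasurable]
    have h1 : ∀ xs : Fin (n + 1) → ℝ,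
        (((PMF.uniformOfFintype (Fin (n + 1))).toMeasure).bind fun k =>
          Measure.map (fun d => (Fin.snoc xs (xs k + d) : Fin (n + 2) → ℝ)) ν) Set.univ = 1 := by
      intro xs
      rw [Measure.bind_apply MeasurableSet.univ (measurable_of_countable _).aemeasurable]
      have : ∀ k : Fin (n + 1),
          (Measure.map (fun d => (Fin.snoc xs (xs k + d) : Fin (n + 2) → ℝ)) ν) Set.univ = 1 := by
        intro k
        rw [Measure.map_apply (measurable_snocFun xs k) MeasurableSet.univ]
        simp
      simp_rw [this]
      simp
    simp_rw [h1]
    simpa using ih.measure_univ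

lemma norm_cexp (θ x : ℝ) : ‖Complex.exp (Complex.I * (θ : ℂ) * (x : ℂ))‖ = 1 := by
  rw [Complex.norm_exp]
  simp

lemma measurable_sumExp (θ : ℝ) (m : ℕ) :
    Measurable (fun xs : Fin m → ℝ => ∑ kk : Fin m, Complex.exp (Complex.I * (θ : ℂ) * (xs kk : ℂ))) := by
  apply Finset.measurable_sum
  intro kk _
  exact Complex.measurable_exp.comp
    (measurable_const.mul (Complex.measurable_ofReal.comp (measurable_pi_apply kk)))

lemma norm_sumExp (θ : ℝ) (m : ℕ) (xs : Fin m → ℝ) :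
    ‖∑ kk : Fin m, Complex.exp (Complex.I * (θ : ℂ) * (xs kk : ℂ))‖ ≤ (m : ℝ) := by
  calc ‖∑ kk : Fin m, Complex.exp (Complex.I * (θ : ℂ) * (xs kk : ℂ))‖
      ≤ ∑ kk : Fin m, ‖Complex.exp (Complex.I * (θ : ℂ) * (xs kk : ℂ))‖ := norm_sum_le _ _
    _ = (m : ℝ) := by
          have : ∀ kk : Fin m, ‖Complex.exp (Complex.I * (θ : ℂ) * (xs kk : ℂ))‖ = 1 :=
            fun kk => norm_cexp θ (xs kk)
          simp [this]

lemma integrable_cexp (ν : Measure ℝ) [IsProbabilityMeasure ν] (θ : ℝ) :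
    Integrable (fun x : ℝ => Complex.exp (Complex.I * (θ : ℂ) * (x : ℂ))) ν := by
  refine Integrable.mono' (integrable_const 1)
    (Complex.measurable_exp.comp (measurable_const.mul Complex.measurable_ofReal)).aestronglyMeasurable
    (Filter.Eventually.of_forall fun x => le_of_eq (norm_cexp θ x))

lemma S_eq (ν : Measure ℝ) [IsProbabilityMeasure ν] (θ : ℝ) (n : ℕ) :
    ∫ xs, ∑ kk : Fin (n + 1), Complex.exp (Complex.I * (θ : ℂ) * (xs kk : ℂ)) ∂(brwLaw ν n)
      = ∏ j ∈ Finset.Icc 1 n,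
          (1 + (∫ x, Complex.exp (Complex.I * (θ : ℂ) * (x : ℂ)) ∂ν) / (j : ℂ)) := by
  set Φ : ℂ := ∫ x, Complex.exp (Complex.I * (θ : ℂ) * (x : ℂ)) ∂ν with hΦ
  induction n with
  | zero =>
    rw [brwLaw, integral_dirac' _ _ (measurable_sumExp θ 1).stronglyMeasurable]
    simp
  | succ n ih =>
    have hprob : IsProbabilityMeasure (brwLaw ν n) := brwLaw_prob ν n
    rw [brwLaw, my_integral_bind _ _ (measurable_kernelFam ν n)
      (fun xs => by
        constructor
        rw [Measure.bind_apply MeasurableSet.univ (measurable_of_countable _).aemeasurable]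
        have : ∀ k : Fin (n + 1),
            (Measure.map (fun d => (Fin.snoc xs (xs k + d) : Fin (n + 2) → ℝ)) ν) Set.univ = 1 := by
          intro k
          rw [Measure.map_apply (measurable_snocFun xs k) MeasurableSet.univ]
          simp
        simp_rw [this]; simp)
      _ (measurable_sumExp θ (n + 2)) ((n : ℝ) + 2)
      (fun xs => by simpa using norm_sumExp θ (n + 2) xs)]
    have hinner : ∀ xs : Fin (n + 1) → ℝ,
        (∫ xs' : Fin (n + 2) → ℝ, ∑ kk : Fin (n + 2), Complex.exp (Complex.I * (θ : ℂ) * (xs' kk : ℂ))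
          ∂(((PMF.uniformOfFintype (Fin (n + 1))).toMeasure).bind fun k =>
              Measure.map (fun d => (Fin.snoc xs (xs k + d) : Fin (n + 2) → ℝ)) ν))
        = (1 + Φ / ((n : ℂ) + 1)) *
            ∑ kk : Fin (n + 1), Complex.exp (Complex.I * (θ : ℂ) * (xs kk : ℂ)) := by
      intro xs
      rw [my_integral_bind _ _ (measurable_of_countable _)
        (fun k => MeasureTheory.Measure.isProbabilityMeasure_map (measurable_snocFun xs k).aemeasurable)
        _ (measurable_sumExp θ (n + 2)) ((n : ℝ) + 2)
        (fun xs' => by simpa using norm_sumExp θ (n + 2) xs')]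
      have hmapint : ∀ k : Fin (n + 1),
          (∫ xs' : Fin (n + 2) → ℝ, ∑ kk : Fin (n + 2), Complex.exp (Complex.I * (θ : ℂ) * (xs' kk : ℂ))
            ∂(Measure.map (fun d => (Fin.snoc xs (xs k + d) : Fin (n + 2) → ℝ)) ν))
          = (∑ kk : Fin (n + 1), Complex.exp (Complex.I * (θ : ℂ) * (xs kk : ℂ)))
              + Complex.exp (Complex.I * (θ : ℂ) * (xs k : ℂ)) * Φ := by
        intro k
        rw [integral_map (measurable_snocFun xs k).aemeasurable
          (measurable_sumExp θ (n + 2)).aestronglyMeasurable]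
        have hexpand : ∀ d : ℝ,
            (∑ kk : Fin (n + 2), Complex.exp (Complex.I * (θ : ℂ) *
              ((Fin.snoc xs (xs k + d) : Fin (n + 2) → ℝ) kk : ℂ)))
            = (∑ kk : Fin (n + 1), Complex.exp (Complex.I * (θ : ℂ) * (xs kk : ℂ)))
                + Complex.exp (Complex.I * (θ : ℂ) * (xs k : ℂ)) *
                    Complex.exp (Complex.I * (θ : ℂ) * (d : ℂ)) := by
          intro d
          rw [Fin.sum_univ_castSucc]
          simp only [Fin.snoc_castSucc, Fin.snoc_last]
          congr 1
          push_cast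
          rw [mul_add, Complex.exp_add]
        simp_rw [hexpand]
        rw [integral_add (integrable_const _) ((integrable_cexp ν θ).const_mul _),
          integral_const, integral_const_mul]
        simp [hΦ]
      simp_rw [hmapint]
      rw [PMF.integral_eq_sum]
      simp only [PMF.uniformOfFintype_apply, Fintype.card_fin, ENNReal.toReal_inv,
        ENNReal.toReal_natCast, Complex.real_smul, Complex.ofReal_inv, Complex.ofReal_natCast]
      rw [← Finset.mul_sum, Finset.sum_add_distrib, Finset.sum_const, ← Finset.sum_mul]
      simp only [Finset.card_univ, Fintype.card_fin, nsmul_eq_mul]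
      have hne : ((n : ℂ) + 1) ≠ 0 := Nat.cast_add_one_ne_zero n
      push_cast
      field_simp
    simp_rw [hinner]
    rw [integral_const_mul, ih, Finset.prod_Icc_succ_top (Nat.le_add_left 1 n)]
    push_cast
    ring

end Aux

/-- with `m = E[Δ]`, `Φ(θ) = E[e^{iθΔ}]` and
`F_n(θ) = Z_n(e^{−imθ}) (n+1)^{−1} ∑_{k=1}^{n+1} e^{iθX_k}`, one has
`E[F_n(θ)] = (n+1)^{−1} Z_n(e^{−imθ}) Z_n(Φ(θ)+1) = (n+1)^{−1} Z_n(e^{−imθ}) ∏_{j=1}^n (1+Φ(θ)/j)`. -/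
theorem stmt_15 (ν : Measure ℝ) [IsProbabilityMeasure ν]
    (hint : Integrable (fun x : ℝ => x) ν) (θ : ℝ) (n : ℕ) (hn : 1 ≤ n) :
    (∫ xs, Zc n (Complex.exp (-Complex.I * ((∫ x, x ∂ν : ℝ) : ℂ) * (θ : ℂ))) *
          ((n : ℂ) + 1)⁻¹ *
          ∑ kk : Fin (n + 1), Complex.exp (Complex.I * (θ : ℂ) * (xs kk : ℂ))
        ∂(brwLaw ν n))
      = ((n : ℂ) + 1)⁻¹ * Zc n (Complex.exp (-Complex.I * ((∫ x, x ∂ν : ℝ) : ℂ) * (θ : ℂ))) *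
          Zc n ((∫ x, Complex.exp (Complex.I * (θ : ℂ) * (x : ℂ)) ∂ν) + 1) ∧
    Zc n ((∫ x, Complex.exp (Complex.I * (θ : ℂ) * (x : ℂ)) ∂ν) + 1)
      = ∏ j ∈ Finset.Icc 1 n,
          (1 + (∫ x, Complex.exp (Complex.I * (θ : ℂ) * (x : ℂ)) ∂ν) / (j : ℂ)) := by
  constructor
  · rw [integral_const_mul, S_eq ν θ n, Zc_add_one]
    ring
  · exact Zc_add_one n _
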